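/- Let I be a finite graph on vertex set V of size n and let D ⊆ V be nonempty such that every vertex of D is adjacent in I to every vertex of V \ D. Then the interference index of D with respect to I equals ⌈log₂(n+1)⌉. -/

import Mathlib

theorem stmt7 {V : Type*} [Fintype V] (I : SimpleGraph V) (D : Set V)
    (hD : D.Nonempty) (hadj : ∀ v ∈ D, ∀ u ∉ D, I.Adj v u) :
    IsLeast {m : ℕ | ∃ f : V → Set (Fin m),
        Function.Injective f ∧ (∀ v, (f v).Nonempty) ∧
        ∀ u ∉ D, ∃ v ∈ D, I.Adj u v ∧ (f u ∩ f v).Nonempty}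
      (Nat.clog 2 (Fintype.card V + 1)) := by
  classical
  obtain ⟨d, hd⟩ := hD
  have hV : Nonempty V := ⟨d⟩
  set n := Fintype.card V with hn
  set m := Nat.clog 2 (n + 1) with hm
  have hnpos : 0 < n := Fintype.card_pos
  have hmpos : 0 < m := Nat.clog_pos one_lt_two (by omega)
  have hFin : Nonempty (Fin m) := ⟨⟨0, hmpos⟩⟩
  have hcardS : Fintype.card {s : Set (Fin m) // s.Nonempty} = 2 ^ m - 1 := by
    have h1 : Fintype.card {s : Set (Fin m) // s.Nonempty} =
        Fintype.card {s : Set (Fin m) // ¬ s = ∅} := by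
      apply Fintype.card_congr
      exact Equiv.subtypeEquivRight (fun s => by simp [Set.nonempty_iff_ne_empty])
    rw [h1, Fintype.card_subtype_compl, Fintype.card_subtype_eq (∅ : Set (Fin m))]
    simp
  have hle : n + 1 ≤ 2 ^ m := Nat.le_pow_clog one_lt_two _
  have hcard_le : Fintype.card V ≤ Fintype.card {s : Set (Fin m) // s.Nonempty} := by
    rw [hcardS]; omega
  obtain ⟨g⟩ := Function.Embedding.nonempty_of_card_le hcard_le
  constructor
  · set e : Equiv.Perm {s : Set (Fin m) // s.Nonempty} :=
      Equiv.swap (g d) ⟨Set.univ, Set.univ_nonempty⟩ with he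
    refine ⟨fun v => (e (g v)).val, ?_, fun v => (e (g v)).2, ?_⟩
    · exact Subtype.val_injective.comp (e.injective.comp g.injective)
    · intro u hu
      refine ⟨d, hd, (hadj d hd u hu).symm, ?_⟩
      have hed : (e (g d)).val = Set.univ := by
        rw [he, Equiv.swap_apply_left]
      show ((e (g u)).val ∩ (e (g d)).val).Nonempty
      rw [hed, Set.inter_univ]
      exact (e (g u)).2
  · rintro k ⟨f, hinj, hne, -⟩
    have : Fintype.card (V ⊕ PUnit.{1}) ≤ Fintype.card (Set (Fin k)) := by
      apply Fintype.card_le_of_injective (fun x => Sum.elim f (fun _ => ∅) x)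
      rintro (a | a) (b | b) h <;>
        simp only [Sum.elim_inl, Sum.elim_inr] at h
      · rw [hinj h]
      · exact absurd h (Set.nonempty_iff_ne_empty.mp (hne a))
      · exact absurd h.symm (Set.nonempty_iff_ne_empty.mp (hne b))
      · rfl
    rw [Fintype.card_sum, Fintype.card_punit, Fintype.card_set, Fintype.card_fin] at this
    exact (Nat.clog_le_iff_le_pow one_lt_two).mpr this
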